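/- Let k be a commutative ring, H a k-bialgebra, A a k-algebra, and ρ : A → A⊗H a k-linear map satisfying (2.1.1) ρ(ab) = ρ(a)ρ(b). Define Δ' : A⊗H → A⊗H⊗H by Δ'(a⊗h) = a1_{[0]} ⊗ h_{(1)}1_{[1]} ⊗ h_{(2)}, the right A-action on A⊗H by (a⊗h)◁b = ab_{[0]} ⊗ hb_{[1]}, and the right A-action on A⊗H⊗H by (a⊗h⊗g)◁b = ab_{[0]} ⊗ hb_{[1]} ⊗ gb_{[2]} (using ρ²(b) = b_{[0]}⊗b_{[1]}⊗b_{[2]}). Then Δ' is right A-linear, i.e. Δ'(ξ◁b) = Δ'(ξ)◁b for all ξ ∈ A⊗H and b ∈ A, if and only if condition (2.2.1) ρ²(a) = a_{[0]}1_{[0]} ⊗ a_{[1](1)}1_{[1]} ⊗ a_{[1](2)} holds for all a ∈ A. -/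

import Mathlib

open TensorProduct

/-- The map `A ⊗ H → (A ⊗ H) ⊗ H`, `a ⊗ h ↦ (a ⊗ h⁽¹⁾) ⊗ h⁽²⁾`, i.e. `id_A ⊗ δ`
followed by the inverse associator. -/
noncomputable def coassocMap (k A H : Type*) [CommRing k] [Ring A] [Algebra k A]
    [Ring H] [Bialgebra k H] :
    A ⊗[k] H →ₗ[k] (A ⊗[k] H) ⊗[k] H :=
  (TensorProduct.assoc k A H H).symm.toLinearMap ∘ₗ
    LinearMap.lTensor A (Coalgebra.comul (R := k) (A := H))

noncomputable def coassocAlgHom (k A H : Type*) [CommRing k] [Ring A] [Algebra k A]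
    [Ring H] [Bialgebra k H] :
    A ⊗[k] H →ₐ[k] (A ⊗[k] H) ⊗[k] H :=
  ((Algebra.TensorProduct.assoc k k k A H H).symm.toAlgHom).comp
    (Algebra.TensorProduct.map (AlgHom.id k A) (Bialgebra.comulAlgHom k H))

lemma coassocMap_eq (k A H : Type*) [CommRing k] [Ring A] [Algebra k A]
    [Ring H] [Bialgebra k H] (x : A ⊗[k] H) :
    coassocMap k A H x = coassocAlgHom k A H x := by
  induction x using TensorProduct.induction_on with
  | zero => simp
  | tmul a h =>
    simp [coassocMap, coassocAlgHom]
    rfl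
  | add x y hx hy => simp [hx, hy]

lemma coassocMap_mul (k A H : Type*) [CommRing k] [Ring A] [Algebra k A]
    [Ring H] [Bialgebra k H] (x y : A ⊗[k] H) :
    coassocMap k A H (x * y) = coassocMap k A H x * coassocMap k A H y := by
  simp [coassocMap_eq]

lemma coassocMap_one (k A H : Type*) [CommRing k] [Ring A] [Algebra k A]
    [Ring H] [Bialgebra k H] :
    coassocMap k A H 1 = 1 := by
  simp [coassocMap_eq]

lemma key (k A H : Type*) [CommRing k] [Ring A] [Algebra k A]
    [Ring H] [Bialgebra k H] (ρ : A →ₗ[k] A ⊗[k] H)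
    (h211 : ∀ a b : A, ρ (a * b) = ρ a * ρ b) (x : A ⊗[k] H) :
    (ρ 1 ⊗ₜ[k] (1 : H)) * ρ.rTensor H x = ρ.rTensor H x := by
  induction x using TensorProduct.induction_on with
  | zero => simp
  | tmul a h =>
    simp only [LinearMap.rTensor_tmul, Algebra.TensorProduct.tmul_mul_tmul, one_mul,
      ← h211, one_mul]
  | add x y hx hy => simp [mul_add, hx, hy]

/-- for `ρ : A → A ⊗ H` multiplicative, the map
`Δ'(a ⊗ h) = a·1₍₀₎ ⊗ h⁽¹⁾·1₍₁₎ ⊗ h⁽²⁾` is right `A`-linear (for the actions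
`ξ ◁ b = ξ·ρ(b)` on `A ⊗ H` and `ζ ◁ b = ζ·ρ²(b)` on `A ⊗ H ⊗ H`) if and only if
condition (2.2.1): `ρ² a = a₍₀₎1₍₀₎ ⊗ a₍₁₎⁽¹⁾1₍₁₎ ⊗ a₍₁₎⁽²⁾` holds for all `a`. -/
theorem comul_right_linear_iff (k A H : Type*) [CommRing k] [Ring A] [Algebra k A]
    [Ring H] [Bialgebra k H] (ρ : A →ₗ[k] A ⊗[k] H)
    (h211 : ∀ a b : A, ρ (a * b) = ρ a * ρ b) :
    (∀ (ξ : A ⊗[k] H) (b : A),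
        coassocMap k A H (ξ * ρ b) * (ρ 1 ⊗ₜ[k] (1 : H)) =
          (coassocMap k A H ξ * (ρ 1 ⊗ₜ[k] (1 : H))) * (ρ.rTensor H (ρ b))) ↔
      (∀ a : A, ρ.rTensor H (ρ a) = coassocMap k A H (ρ a) * (ρ 1 ⊗ₜ[k] (1 : H))) := by
  constructor
  · intro h a
    have := h 1 a
    rw [one_mul, coassocMap_one, one_mul] at this
    rw [this, key k A H ρ h211]
  · intro h ξ b
    rw [coassocMap_mul, mul_assoc, ← h, mul_assoc, key k A H ρ h211]
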